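/- arXiv:2105.02073 — 3 statements merged into one kernel-verified Lean document; each statement's English description precedes it below -/
import Mathlib

section
/- Let X and Y be Polish spaces, k_X a cost function on X, d_Y a lower semicontinuous pseudo-metric on Y, and let the cost on X × Y be c(x₁,y₁,x₂,y₂) = h(k_X(x₁,x₂) + d_Y(y₁,y₂)), where h : [0,∞) → [0,∞) is strictly increasing with h(0) = 0. Set c_Y = h ∘ d_Y, and let γ be a probability measure on X × Y with second marginal ν. If γ is contracting (i.e., d_Y(y₁,y₂) ≤ k_X(x₁,x₂) for all (x₁,y₁), (x₂,y₂) in the support of γ), then τ_c(γ) = diam_{c_Y} ν. Conversely, if diam_{c_Y} ν < ∞ and τ_c(γ) = diam_{c_Y} ν, then γ is almost surely contracting, i.e., d_Y(y₁,y₂) ≤ k_X(x₁,x₂) holds (γ ⊗ γ)-almost everywhere. -/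
open MeasureTheory ENNReal Filter Topology ProbabilityTheory

/-- The optimal transport cost between two measures `μ` and `ν` on a space `Z`
with base cost `c`. -/
noncomputable def otCost {Z : Type*} [MeasurableSpace Z]
    (c : Z → Z → ℝ≥0∞) (μ ν : Measure Z) : ℝ≥0∞ :=
  ⨅ (π : Measure (Z × Z)) (_ : π.map Prod.fst = μ ∧ π.map Prod.snd = ν),
    ∫⁻ p, c p.1 p.2 ∂π

/-- The transport dependency of a measure `γ` on `X × Y`. -/
noncomputable def tdep {X Y : Type*} [MeasurableSpace X] [MeasurableSpace Y]
    (c : X × Y → X × Y → ℝ≥0∞) (γ : Measure (X × Y)) : ℝ≥0∞ :=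
  otCost c γ ((γ.map Prod.fst).prod (γ.map Prod.snd))

/-- The `c`-diameter of a measure `μ`: `diam_c μ = ∫∫ c dμ dμ`. -/
noncomputable def diamC {Z : Type*} [MeasurableSpace Z]
    (c : Z → Z → ℝ≥0∞) (μ : Measure Z) : ℝ≥0∞ :=
  ∫⁻ z₁, ∫⁻ z₂, c z₁ z₂ ∂μ ∂μ

/-- The (topological) support of a measure: the set of points all of whose open
neighborhoods have positive measure (the smallest closed set of full measure). -/
def msupport {Z : Type*} [TopologicalSpace Z] [MeasurableSpace Z]
    (μ : Measure Z) : Set Z :=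
  {z | ∀ U : Set Z, IsOpen U → z ∈ U → 0 < μ U}

lemma isClosed_msupport {Z : Type*} [TopologicalSpace Z] [MeasurableSpace Z]
    (μ : Measure Z) : IsClosed (msupport μ) := by
  rw [← isOpen_compl_iff, isOpen_iff_forall_mem_open]
  intro z hz
  simp only [Set.mem_compl_iff, msupport, Set.mem_setOf_eq, not_forall] at hz
  obtain ⟨U, hU, hzU, hμU⟩ := hz
  refine ⟨U, fun w hw => ?_, hU, hzU⟩
  simp only [Set.mem_compl_iff, msupport, Set.mem_setOf_eq, not_forall]
  exact ⟨U, hU, hw, hμU⟩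

lemma measure_compl_msupport {Z : Type*} [TopologicalSpace Z] [SecondCountableTopology Z]
    [MeasurableSpace Z] (μ : Measure Z) : μ (msupport μ)ᶜ = 0 := by
  obtain ⟨b, hbc, -, hb⟩ := TopologicalSpace.exists_countable_basis Z
  have hsub : (msupport μ)ᶜ ⊆ ⋃₀ {B | B ∈ b ∧ μ B = 0} := by
    intro z hz
    simp only [Set.mem_compl_iff, msupport, Set.mem_setOf_eq, not_forall] at hz
    obtain ⟨U, hU, hzU, hμU⟩ := hz
    obtain ⟨B, hBb, hzB, hBU⟩ := hb.exists_subset_of_mem_open hzU hU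
    have hμB : μ B = 0 := le_antisymm (le_trans (measure_mono hBU) (le_of_not_gt hμU)) (by positivity)
    exact ⟨B, ⟨hBb, hμB⟩, hzB⟩
  refine measure_mono_null hsub ?_
  exact (measure_sUnion_null_iff (hbc.mono (Set.sep_subset _ _))).2 fun s hs => hs.2

/-- For additive costs `c = h(k_X + d_Y)` with `h` strictly increasing
and vanishing at `0`: if `γ` is contracting on its support, then
`τ_c(γ) = diam_{c_Y} ν` with `c_Y = h ∘ d_Y`; conversely, if `diam_{c_Y} ν < ∞` and
`τ_c(γ) = diam_{c_Y} ν`, then `γ` is almost surely contracting. -/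
theorem tdep_eq_diam_of_contracting
    {X Y : Type*} [TopologicalSpace X] [PolishSpace X] [MeasurableSpace X] [BorelSpace X]
    [TopologicalSpace Y] [PolishSpace Y] [MeasurableSpace Y] [BorelSpace Y]
    (kX : X → X → ℝ≥0∞)
    (hkX_lsc : LowerSemicontinuous (Function.uncurry kX))
    (hkX_symm : ∀ x₁ x₂, kX x₁ x₂ = kX x₂ x₁)
    (hkX_diag : ∀ x, kX x x = 0)
    (dY : Y → Y → ℝ≥0∞)
    (hdY_lsc : LowerSemicontinuous (Function.uncurry dY))
    (hdY_symm : ∀ y₁ y₂, dY y₁ y₂ = dY y₂ y₁)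
    (hdY_diag : ∀ y, dY y y = 0)
    (hdY_triangle : ∀ y₁ y₂ y₃, dY y₁ y₃ ≤ dY y₁ y₂ + dY y₂ y₃)
    (h : ℝ≥0∞ → ℝ≥0∞) (hh_mono : StrictMono h) (hh_zero : h 0 = 0)
    (c : X × Y → X × Y → ℝ≥0∞)
    (hc : ∀ z₁ z₂ : X × Y, c z₁ z₂ = h (kX z₁.1 z₂.1 + dY z₁.2 z₂.2))
    (γ : Measure (X × Y)) [IsProbabilityMeasure γ] :
    ((∀ z₁ ∈ msupport γ, ∀ z₂ ∈ msupport γ, dY z₁.2 z₂.2 ≤ kX z₁.1 z₂.1) →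
        tdep c γ = diamC (fun y₁ y₂ => h (dY y₁ y₂)) (γ.map Prod.snd)) ∧
      (diamC (fun y₁ y₂ => h (dY y₁ y₂)) (γ.map Prod.snd) ≠ ∞ →
        tdep c γ = diamC (fun y₁ y₂ => h (dY y₁ y₂)) (γ.map Prod.snd) →
        ∀ᵐ q ∂(γ.prod γ), dY q.1.2 q.2.2 ≤ kX q.1.1 q.2.1) := by
  classical
  -- basic measurability facts
  have mdY : Measurable fun p : Y × Y => dY p.1 p.2 := by
    exact hdY_lsc.measurable
  have mkX : Measurable fun p : X × X => kX p.1 p.2 := by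
    exact hkX_lsc.measurable
  have mh : Measurable h := hh_mono.monotone.measurable
  have mc : Measurable fun p : (X × Y) × (X × Y) => c p.1 p.2 := by
    have hce : (fun p : (X × Y) × (X × Y) => c p.1 p.2)
        = fun p => h (kX p.1.1 p.2.1 + dY p.1.2 p.2.2) := by
      funext p; rw [hc]
    rw [hce]
    exact mh.comp ((mkX.comp (measurable_fst.fst.prodMk measurable_snd.fst)).add
      (mdY.comp (measurable_fst.snd.prodMk measurable_snd.snd)))
  set ν : Measure Y := γ.map Prod.snd with hν
  set μX : Measure X := γ.map Prod.fst with hμX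
  haveI : IsProbabilityMeasure ν := Measure.isProbabilityMeasure_map measurable_snd.aemeasurable
  haveI : IsProbabilityMeasure μX := Measure.isProbabilityMeasure_map measurable_fst.aemeasurable
  set H : Y → ℝ≥0∞ := fun y => ∫⁻ y₂, h (dY y y₂) ∂ν with hH
  have mH : Measurable H := by
    apply Measurable.lintegral_prod_right (f := fun y y₂ => h (dY y y₂))
    exact mh.comp (mdY.comp (measurable_fst.prodMk measurable_snd))
  have hdiam : diamC (fun y₁ y₂ => h (dY y₁ y₂)) ν = ∫⁻ y, H y ∂ν := rfl
  have hHγ : ∫⁻ z, H z.2 ∂γ = ∫⁻ y, H y ∂ν := (lintegral_map mH measurable_snd).symm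
  -- Upper bound: τ ≤ diam, always
  have hUB : otCost c γ (μX.prod ν) ≤ diamC (fun y₁ y₂ => h (dY y₁ y₂)) ν := by
    set π₀ : Measure ((X × Y) × (X × Y)) :=
      (γ.prod ν).map (fun p => (p.1, (p.1.1, p.2))) with hπ₀
    have hmF : Measurable fun p : (X × Y) × Y => (p.1, (p.1.1, p.2)) :=
      measurable_fst.prodMk (measurable_fst.fst.prodMk measurable_snd)
    have h1 : π₀.map Prod.fst = γ := by
      rw [hπ₀, Measure.map_map measurable_fst hmF]
      have : (Prod.fst ∘ fun p : (X × Y) × Y => (p.1, (p.1.1, p.2))) = Prod.fst := rfl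
      rw [this]
      exact Measure.fst_prod
    have h2 : π₀.map Prod.snd = μX.prod ν := by
      rw [hπ₀, Measure.map_map measurable_snd hmF]
      have : (Prod.snd ∘ fun p : (X × Y) × Y => (p.1, (p.1.1, p.2)))
          = Prod.map Prod.fst id := rfl
      rw [this, ← Measure.map_prod_map _ _ measurable_fst measurable_id, Measure.map_id]
    have h3 : ∫⁻ p, c p.1 p.2 ∂π₀ = diamC (fun y₁ y₂ => h (dY y₁ y₂)) ν := by
      rw [hπ₀, lintegral_map mc hmF]
      have hint : ∀ p : (X × Y) × Y, c p.1 (p.1.1, p.2) = h (dY p.1.2 p.2) := by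
        intro p; rw [hc]; simp [hkX_diag]
      calc ∫⁻ p, c p.1 (p.1.1, p.2) ∂(γ.prod ν)
          = ∫⁻ p, h (dY p.1.2 p.2) ∂(γ.prod ν) := lintegral_congr hint
        _ = ∫⁻ z, ∫⁻ y₂, h (dY z.2 y₂) ∂ν ∂γ :=
            lintegral_prod _ ((mh.comp (mdY.comp
              (measurable_fst.snd.prodMk measurable_snd))).aemeasurable)
        _ = ∫⁻ z, H z.2 ∂γ := rfl
        _ = ∫⁻ y, H y ∂ν := hHγ
        _ = diamC (fun y₁ y₂ => h (dY y₁ y₂)) ν := rfl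
    calc otCost c γ (μX.prod ν) ≤ ∫⁻ p, c p.1 p.2 ∂π₀ := iInf₂_le π₀ ⟨h1, h2⟩
      _ = _ := h3
  -- support facts
  set S : Set (X × Y) := msupport γ with hS
  have hSm : MeasurableSet S := (isClosed_msupport γ).measurableSet
  have hSnull : γ Sᶜ = 0 := measure_compl_msupport γ
  constructor
  · -- forward direction
    intro hcon
    have hLB : ∀ π : Measure ((X × Y) × (X × Y)), π.map Prod.fst = γ →
        π.map Prod.snd = μX.prod ν →
        diamC (fun y₁ y₂ => h (dY y₁ y₂)) ν ≤ ∫⁻ p, c p.1 p.2 ∂π := by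
      intro π hπ1 hπ2
      haveI : IsProbabilityMeasure π := by
        constructor
        have := congrArg (fun m : Measure (X × Y) => m Set.univ) hπ1
        simpa [Measure.map_apply measurable_fst MeasurableSet.univ] using this
      have hne : Nonempty (X × Y) := by
        by_contra hne
        rw [not_nonempty_iff] at hne
        have huniv : γ Set.univ = 1 := measure_univ
        rw [Set.univ_eq_empty_iff.2 hne] at huniv
        simp at huniv
      haveI : Nonempty Y := ⟨hne.some.2⟩
      set κ := γ.condKernel with hκ
      have hdis : μX ⊗ₘ κ = γ := γ.disintegrate κ
      set η : ProbabilityTheory.Kernel ((X × Y) × (X × Y)) Y :=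
        κ.comap (fun p => p.2.1) (measurable_snd.fst) with hη
      set Θ := π ⊗ₘ η with hΘ
      -- a.e. facts
      have hae1 : ∀ᵐ q ∂Θ, q.1.1 ∈ S := by
        rw [ae_iff]
        have hset : {q : ((X × Y) × (X × Y)) × Y | ¬ q.1.1 ∈ S}
            = (fun q : ((X × Y) × (X × Y)) × Y => q.1.1) ⁻¹' Sᶜ := rfl
        have hmap : Θ.map (fun q : ((X × Y) × (X × Y)) × Y => q.1.1) = γ := by
          have e1 : (fun q : ((X × Y) × (X × Y)) × Y => q.1.1)
              = Prod.fst ∘ Prod.fst := rfl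
          rw [e1, ← Measure.map_map measurable_fst measurable_fst]
          have : Θ.map Prod.fst = π := Measure.fst_compProd π η
          rw [this, hπ1]
        rw [hset, ← Measure.map_apply measurable_fst.fst hSm.compl, hmap]
        exact hSnull
      have hae2 : ∀ᵐ q ∂Θ, (q.1.2.1, q.2) ∈ S := by
        rw [ae_iff]
        have hmg : Measurable fun q : ((X × Y) × (X × Y)) × Y => (q.1.2.1, q.2) :=
          measurable_fst.snd.fst.prodMk measurable_snd
        have hset : {q : ((X × Y) × (X × Y)) × Y | ¬ (q.1.2.1, q.2) ∈ S}
            = (fun q : ((X × Y) × (X × Y)) × Y => (q.1.2.1, q.2)) ⁻¹' Sᶜ := rfl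
        have hmap : Θ.map (fun q : ((X × Y) × (X × Y)) × Y => (q.1.2.1, q.2)) = γ := by
          ext s hs
          rw [Measure.map_apply hmg hs, hΘ, Measure.compProd_apply (hmg hs)]
          have hFmeas : Measurable fun x : X => κ x (Prod.mk x ⁻¹' s) :=
            ProbabilityTheory.Kernel.measurable_kernel_prodMk_left hs
          have heq : ∀ p : (X × Y) × (X × Y),
              η p (Prod.mk p ⁻¹' ((fun q : ((X × Y) × (X × Y)) × Y =>
                (q.1.2.1, q.2)) ⁻¹' s)) = κ p.2.1 (Prod.mk p.2.1 ⁻¹' s) := by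
            intro p
            rw [hη, ProbabilityTheory.Kernel.comap_apply]
            rfl
          calc ∫⁻ p, η p (Prod.mk p ⁻¹' ((fun q : ((X × Y) × (X × Y)) × Y =>
                (q.1.2.1, q.2)) ⁻¹' s)) ∂π
              = ∫⁻ p, κ p.2.1 (Prod.mk p.2.1 ⁻¹' s) ∂π := lintegral_congr heq
            _ = ∫⁻ z, κ z.1 (Prod.mk z.1 ⁻¹' s) ∂(π.map Prod.snd) :=
                (lintegral_map (hFmeas.comp measurable_fst) measurable_snd).symm
            _ = ∫⁻ z, κ z.1 (Prod.mk z.1 ⁻¹' s) ∂(μX.prod ν) := by rw [hπ2]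
            _ = ∫⁻ x, κ x (Prod.mk x ⁻¹' s) ∂((μX.prod ν).map Prod.fst) :=
                (lintegral_map hFmeas measurable_fst).symm
            _ = ∫⁻ x, κ x (Prod.mk x ⁻¹' s) ∂μX := by
                rw [show (μX.prod ν).map Prod.fst = μX from Measure.fst_prod]
            _ = (μX ⊗ₘ κ) s := (Measure.compProd_apply hs).symm
            _ = γ s := by rw [hdis]
        rw [hset, ← Measure.map_apply hmg hSm.compl, hmap]
        exact hSnull
      -- integral identities
      have hint1 : ∫⁻ q, c q.1.1 q.1.2 ∂Θ = ∫⁻ p, c p.1 p.2 ∂π := by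
        rw [hΘ, Measure.lintegral_compProd (f := fun q : ((X × Y) × (X × Y)) × Y => c q.1.1 q.1.2) (mc.comp measurable_fst)]
        refine lintegral_congr fun p => ?_
        simp
      have mg2 : Measurable fun q : ((X × Y) × (X × Y)) × Y => h (dY q.2 q.1.2.2) :=
        mh.comp (mdY.comp (measurable_snd.prodMk measurable_fst.snd.snd))
      have mG : Measurable fun z : X × Y => ∫⁻ y, h (dY y z.2) ∂(κ z.1) := by
        have hunc : Measurable (Function.uncurry fun (z : X × Y) (y : Y) => h (dY y z.2)) :=
          mh.comp (mdY.comp (measurable_snd.prodMk measurable_fst.snd))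
        have hm := Measurable.lintegral_kernel_prod_right
          (κ := κ.comap (Prod.fst : X × Y → X) measurable_fst) hunc
        simpa [ProbabilityTheory.Kernel.comap_apply] using hm
      have hint2 : ∫⁻ q, h (dY q.2 q.1.2.2) ∂Θ = diamC (fun y₁ y₂ => h (dY y₁ y₂)) ν := by
        rw [hΘ, Measure.lintegral_compProd mg2]
        calc ∫⁻ p, ∫⁻ y, h (dY y p.2.2) ∂(η p) ∂π
            = ∫⁻ p, ∫⁻ y, h (dY y p.2.2) ∂(κ p.2.1) ∂π := by
              refine lintegral_congr fun p => ?_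
              rw [hη, ProbabilityTheory.Kernel.comap_apply]
          _ = ∫⁻ z, ∫⁻ y, h (dY y z.2) ∂(κ z.1) ∂(π.map Prod.snd) :=
              (lintegral_map mG measurable_snd).symm
          _ = ∫⁻ z, ∫⁻ y, h (dY y z.2) ∂(κ z.1) ∂(μX.prod ν) := by rw [hπ2]
          _ = ∫⁻ x, ∫⁻ y₂, ∫⁻ y, h (dY y y₂) ∂(κ x) ∂ν ∂μX :=
              lintegral_prod _ mG.aemeasurable
          _ = ∫⁻ x, ∫⁻ y, H y ∂(κ x) ∂μX := by
              refine lintegral_congr fun x => ?_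
              exact lintegral_lintegral_swap
                ((mh.comp (mdY.comp (measurable_snd.prodMk measurable_fst))).aemeasurable)
          _ = ∫⁻ z, H z.2 ∂(μX ⊗ₘ κ) :=
              (Measure.lintegral_compProd (mH.comp measurable_snd)).symm
          _ = ∫⁻ z, H z.2 ∂γ := by rw [hdis]
          _ = ∫⁻ y, H y ∂ν := hHγ
          _ = _ := rfl
      have hmid : ∫⁻ q, h (dY q.2 q.1.2.2) ∂Θ ≤ ∫⁻ q, c q.1.1 q.1.2 ∂Θ := by
        refine lintegral_mono_ae ?_
        filter_upwards [hae1, hae2] with q hq1 hq2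
        have ht1 : dY q.2 q.1.1.2 ≤ kX q.1.2.1 q.1.1.1 := hcon _ hq2 _ hq1
        calc h (dY q.2 q.1.2.2)
            ≤ h (dY q.2 q.1.1.2 + dY q.1.1.2 q.1.2.2) :=
              hh_mono.monotone (hdY_triangle _ _ _)
          _ ≤ h (kX q.1.2.1 q.1.1.1 + dY q.1.1.2 q.1.2.2) :=
              hh_mono.monotone (add_le_add_left ht1 _)
          _ = c q.1.1 q.1.2 := by rw [hc q.1.1 q.1.2, hkX_symm q.1.1.1 q.1.2.1]
      calc diamC (fun y₁ y₂ => h (dY y₁ y₂)) ν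
          = ∫⁻ q, h (dY q.2 q.1.2.2) ∂Θ := hint2.symm
        _ ≤ ∫⁻ q, c q.1.1 q.1.2 ∂Θ := hmid
        _ = ∫⁻ p, c p.1 p.2 ∂π := hint1
    have hfinal : otCost c γ (μX.prod ν) = diamC (fun y₁ y₂ => h (dY y₁ y₂)) ν :=
      le_antisymm hUB (le_iInf fun π => le_iInf fun hπ => hLB π hπ.1 hπ.2)
    exact hfinal
  · -- converse direction
    intro hfin heq
    set Γ := γ.prod γ with hΓ
    set B : Set ((X × Y) × (X × Y)) := {p | kX p.1.1 p.2.1 < dY p.1.2 p.2.2} with hB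
    have mk2 : Measurable fun p : (X × Y) × (X × Y) => kX p.1.1 p.2.1 :=
      mkX.comp (measurable_fst.fst.prodMk measurable_snd.fst)
    have md2 : Measurable fun p : (X × Y) × (X × Y) => dY p.1.2 p.2.2 :=
      mdY.comp (measurable_fst.snd.prodMk measurable_snd.snd)
    have hBm : MeasurableSet B := measurableSet_lt mk2 md2
    set v : (X × Y) × (X × Y) → ℝ≥0∞ := fun p => h (dY p.1.2 p.2.2) with hv
    set w : (X × Y) × (X × Y) → ℝ≥0∞ :=
      fun p => if p ∈ B then h (kX p.1.1 p.2.1) else h (dY p.1.2 p.2.2) with hw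
    have mv : Measurable v := mh.comp md2
    have mw : Measurable w := Measurable.ite hBm (mh.comp mk2) (mh.comp md2)
    have h12 : (2⁻¹ + 2⁻¹ : ℝ≥0∞) = 1 := by
      rw [← two_mul, ENNReal.mul_inv_cancel (by norm_num) (by norm_num)]
    -- ∫ v dΓ = diam
    have hvint : ∫⁻ p, v p ∂Γ = diamC (fun y₁ y₂ => h (dY y₁ y₂)) ν := by
      calc ∫⁻ p, v p ∂Γ
          = ∫⁻ z, ∫⁻ z', h (dY z.2 z'.2) ∂γ ∂γ := lintegral_prod _ mv.aemeasurable
        _ = ∫⁻ z, H z.2 ∂γ := by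
            refine lintegral_congr fun z => ?_
            exact (lintegral_map (mh.comp (mdY.comp
              (measurable_const.prodMk measurable_id))) measurable_snd).symm
        _ = ∫⁻ y, H y ∂ν := hHγ
        _ = _ := rfl
    -- the swapped coupling
    set F : (X × Y) × (X × Y) → (X × Y) × (X × Y) :=
      fun p => (p.1, if p ∈ B then (p.2.1, p.1.2) else (p.1.1, p.2.2)) with hF
    set G : (X × Y) × (X × Y) → (X × Y) × (X × Y) :=
      fun p => (p.2, if p ∈ B then (p.1.1, p.2.2) else (p.2.1, p.1.2)) with hG
    have mF : Measurable F :=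
      measurable_fst.prodMk (Measurable.ite hBm
        (measurable_snd.fst.prodMk measurable_fst.snd)
        (measurable_fst.fst.prodMk measurable_snd.snd))
    have mG : Measurable G :=
      measurable_snd.prodMk (Measurable.ite hBm
        (measurable_fst.fst.prodMk measurable_snd.snd)
        (measurable_snd.fst.prodMk measurable_fst.snd))
    set πn : Measure ((X × Y) × (X × Y)) := (2 : ℝ≥0∞)⁻¹ • (Γ.map F) + (2 : ℝ≥0∞)⁻¹ • (Γ.map G) with hπn
    have hfst_n : πn.map Prod.fst = γ := by
      rw [hπn, Measure.map_add _ _ measurable_fst, Measure.map_smul, Measure.map_smul,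
        Measure.map_map measurable_fst mF, Measure.map_map measurable_fst mG]
      have e1 : (Prod.fst ∘ F) = Prod.fst := rfl
      have e2 : (Prod.fst ∘ G) = Prod.snd := rfl
      rw [e1, e2, show Γ.map Prod.fst = γ from Measure.fst_prod,
        show Γ.map Prod.snd = γ from Measure.snd_prod, ← add_smul, h12, one_smul]
    set g₁ : (X × Y) × (X × Y) → X × Y := fun p => (p.2.1, p.1.2) with hg₁
    set g₂ : (X × Y) × (X × Y) → X × Y := fun p => (p.1.1, p.2.2) with hg₂
    have mg₁ : Measurable g₁ := measurable_snd.fst.prodMk measurable_fst.snd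
    have mg₂ : Measurable g₂ := measurable_fst.fst.prodMk measurable_snd.snd
    have hΓg₂ : Γ.map g₂ = μX.prod ν := by
      have : g₂ = Prod.map Prod.fst Prod.snd := rfl
      rw [this, hΓ, ← Measure.map_prod_map _ _ measurable_fst measurable_snd]
    have hΓg₁ : Γ.map g₁ = μX.prod ν := by
      have : g₁ = g₂ ∘ Prod.swap := rfl
      rw [this, ← Measure.map_map mg₂ measurable_swap,
        show Γ.map Prod.swap = Γ from Measure.prod_swap, hΓg₂]
    have hsnd_n : πn.map Prod.snd = μX.prod ν := by
      rw [hπn, Measure.map_add _ _ measurable_snd, Measure.map_smul, Measure.map_smul,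
        Measure.map_map measurable_snd mF, Measure.map_map measurable_snd mG]
      have key : Γ.map (Prod.snd ∘ F) + Γ.map (Prod.snd ∘ G)
          = (μX.prod ν) + (μX.prod ν) := by
        ext s hs
        have mFs : Measurable (Prod.snd ∘ F) := measurable_snd.comp mF
        have mGs : Measurable (Prod.snd ∘ G) := measurable_snd.comp mG
        rw [Measure.add_apply, Measure.add_apply,
          Measure.map_apply mFs hs, Measure.map_apply mGs hs]
        have hE1 : (Prod.snd ∘ F) ⁻¹' s = (g₁ ⁻¹' s ∩ B) ∪ (g₂ ⁻¹' s \ B) := by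
          ext p
          by_cases hp : p ∈ B <;>
            simp [F, hp, Set.mem_diff, g₁, g₂]
        have hE2 : (Prod.snd ∘ G) ⁻¹' s = (g₂ ⁻¹' s ∩ B) ∪ (g₁ ⁻¹' s \ B) := by
          ext p
          by_cases hp : p ∈ B <;>
            simp [G, hp, Set.mem_diff, g₁, g₂]
        have hd1 : Disjoint (g₁ ⁻¹' s ∩ B) (g₂ ⁻¹' s \ B) :=
          disjoint_compl_right.mono Set.inter_subset_right (Set.diff_subset_compl _ _)
        have hd2 : Disjoint (g₂ ⁻¹' s ∩ B) (g₁ ⁻¹' s \ B) :=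
          disjoint_compl_right.mono Set.inter_subset_right (Set.diff_subset_compl _ _)
        rw [hE1, hE2, measure_union hd1 ((mg₂ hs).diff hBm),
          measure_union hd2 ((mg₁ hs).diff hBm)]
        have : Γ (g₁ ⁻¹' s ∩ B) + Γ (g₂ ⁻¹' s \ B)
            + (Γ (g₂ ⁻¹' s ∩ B) + Γ (g₁ ⁻¹' s \ B))
            = (Γ (g₁ ⁻¹' s ∩ B) + Γ (g₁ ⁻¹' s \ B))
            + (Γ (g₂ ⁻¹' s ∩ B) + Γ (g₂ ⁻¹' s \ B)) := by ring
        rw [this, measure_inter_add_diff _ hBm, measure_inter_add_diff _ hBm,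
          ← Measure.map_apply mg₁ hs, ← Measure.map_apply mg₂ hs, hΓg₁, hΓg₂]
      calc (2 : ℝ≥0∞)⁻¹ • Γ.map (Prod.snd ∘ F) + (2 : ℝ≥0∞)⁻¹ • Γ.map (Prod.snd ∘ G)
          = (2 : ℝ≥0∞)⁻¹ • (Γ.map (Prod.snd ∘ F) + Γ.map (Prod.snd ∘ G)) := (smul_add _ _ _).symm
        _ = (2 : ℝ≥0∞)⁻¹ • ((μX.prod ν) + (μX.prod ν)) := by rw [key]
        _ = μX.prod ν := by
            rw [smul_add, ← add_smul, h12, one_smul]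
    -- cost of the swapped coupling
    have hcost : ∫⁻ p, c p.1 p.2 ∂πn = ∫⁻ p, w p ∂Γ := by
      rw [hπn, lintegral_add_measure, lintegral_smul_measure, lintegral_smul_measure,
        lintegral_map mc mF, lintegral_map mc mG]
      have e1 : ∀ p, c (F p).1 (F p).2 = w p := by
        intro p
        by_cases hp : p ∈ B
        · simp only [F, w, hp, if_true]
          rw [hc]
          simp [hdY_diag]
        · simp only [F, w, hp, if_false]
          rw [hc]
          simp [hkX_diag]
      have e2 : ∀ p, c (G p).1 (G p).2 = w p := by
        intro p
        by_cases hp : p ∈ B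
        · simp only [G, w, hp, if_true]
          rw [hc]
          simp [hdY_diag, hkX_symm p.2.1 p.1.1]
        · simp only [G, w, hp, if_false]
          rw [hc]
          simp [hkX_diag, hdY_symm p.2.2 p.1.2]
      rw [lintegral_congr e1, lintegral_congr e2, ← add_smul, h12, one_smul]
    -- optimality forces Γ B = 0
    have hτ_le : diamC (fun y₁ y₂ => h (dY y₁ y₂)) ν ≤ ∫⁻ p, w p ∂Γ := by
      rw [← heq]
      calc tdep c γ ≤ ∫⁻ p, c p.1 p.2 ∂πn := iInf₂_le πn ⟨hfst_n, hsnd_n⟩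
        _ = ∫⁻ p, w p ∂Γ := hcost
    have hwv : ∀ p, w p ≤ v p := by
      intro p
      by_cases hp : p ∈ B
      · simp only [w, v, hp, if_true]
        exact (hh_mono (hp : kX p.1.1 p.2.1 < dY p.1.2 p.2.2)).le
      · simp only [w, v, hp, if_false]
        exact le_rfl
    have hw_eq : ∫⁻ p, w p ∂Γ = ∫⁻ p, v p ∂Γ := by
      refine le_antisymm (lintegral_mono hwv) ?_
      rw [hvint]
      exact hτ_le
    have hw_fin : ∫⁻ p, w p ∂Γ ≠ ∞ := by
      rw [hw_eq, hvint]
      exact hfin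
    have hsub0 : ∫⁻ p, v p - w p ∂Γ = 0 := by
      rw [lintegral_sub mw hw_fin (ae_of_all _ hwv), hw_eq, tsub_self]
    have hae0 : ∀ᵐ p ∂Γ, v p - w p = 0 := by
      have := (lintegral_eq_zero_iff (mv.sub mw)).1 hsub0
      filter_upwards [this] with p hp
      simpa using hp
    filter_upwards [hae0] with p hp
    by_contra hlt
    have hpB : p ∈ B := by
      simp only [B, Set.mem_setOf_eq]
      exact lt_of_not_ge hlt
    have hle : v p ≤ w p := tsub_eq_zero_iff_le.1 hp
    have hlt2 : w p < v p := by
      simp only [w, v, hpB, if_true]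
      exact hh_mono hpB
    exact absurd hle (not_le_of_gt hlt2)
end

section
/- Let X and Y be Polish spaces and let c(x₁,y₁,x₂,y₂) = h(k_X(x₁,x₂) + d_Y(y₁,y₂)) be a cost function on X × Y, where h : [0,∞) → [0,∞) is continuous, strictly increasing with h(0) = 0, k_X is a continuous cost function on X, and d_Y is a continuous metric on Y. Set c_Y = h ∘ d_Y. Let γ be a probability measure on X × Y with marginals μ and ν and diam_{c_Y} ν < ∞. Then τ_c(γ) = diam_{c_Y} ν holds if and only if γ = (id, φ)_*μ for a measurable function φ : X → Y that is μ-almost surely contracting, i.e., there exists a Borel set A ⊆ X with μ(A) = 1 such that d_Y(φ(x₁), φ(x₂)) ≤ k_X(x₁,x₂) for all x₁, x₂ ∈ A. -/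
open MeasureTheory ENNReal Filter Topology

/-- For continuous additive costs `c = h(k_X + d_Y)` with `d_Y` a
continuous metric, `τ_c(γ) = diam_{c_Y} ν` if and only if `γ = (id, φ)_*μ` for a
μ-almost surely contracting measurable map `φ : X → Y`. -/
theorem tdep_eq_diam_iff_contraction
    {X Y : Type*} [TopologicalSpace X] [PolishSpace X] [MeasurableSpace X] [BorelSpace X]
    [TopologicalSpace Y] [PolishSpace Y] [MeasurableSpace Y] [BorelSpace Y]
    (kX : X → X → ℝ≥0∞)
    (hkX_cont : Continuous (Function.uncurry kX))
    (hkX_symm : ∀ x₁ x₂, kX x₁ x₂ = kX x₂ x₁)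
    (hkX_diag : ∀ x, kX x x = 0)
    (dY : Y → Y → ℝ≥0∞)
    (hdY_cont : Continuous (Function.uncurry dY))
    (hdY_symm : ∀ y₁ y₂, dY y₁ y₂ = dY y₂ y₁)
    (hdY_diag : ∀ y, dY y y = 0)
    (hdY_triangle : ∀ y₁ y₂ y₃, dY y₁ y₃ ≤ dY y₁ y₂ + dY y₂ y₃)
    (hdY_pos : ∀ y₁ y₂, y₁ ≠ y₂ → 0 < dY y₁ y₂)
    (h : ℝ≥0∞ → ℝ≥0∞) (hh_cont : Continuous h) (hh_mono : StrictMono h)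
    (hh_zero : h 0 = 0)
    (c : X × Y → X × Y → ℝ≥0∞)
    (hc : ∀ z₁ z₂ : X × Y, c z₁ z₂ = h (kX z₁.1 z₂.1 + dY z₁.2 z₂.2))
    (γ : Measure (X × Y)) [IsProbabilityMeasure γ]
    (hdiam : diamC (fun y₁ y₂ => h (dY y₁ y₂)) (γ.map Prod.snd) ≠ ∞) :
    tdep c γ = diamC (fun y₁ y₂ => h (dY y₁ y₂)) (γ.map Prod.snd) ↔
      ∃ φ : X → Y, Measurable φ ∧
        γ = (γ.map Prod.fst).map (fun x => (x, φ x)) ∧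
        ∃ A : Set X, MeasurableSet A ∧ (γ.map Prod.fst) A = 1 ∧
          ∀ x₁ ∈ A, ∀ x₂ ∈ A, dY (φ x₁) (φ x₂) ≤ kX x₁ x₂ := by
  classical
  -- notation
  set μ : Measure X := γ.map Prod.fst with hμdef
  set ν : Measure Y := γ.map Prod.snd with hνdef
  haveI hμP : IsProbabilityMeasure μ := Measure.isProbabilityMeasure_map measurable_fst.aemeasurable
  haveI hνP : IsProbabilityMeasure ν := Measure.isProbabilityMeasure_map measurable_snd.aemeasurable
  set D : ℝ≥0∞ := diamC (fun y₁ y₂ => h (dY y₁ y₂)) ν with hDdef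
  -- continuity and measurability facts
  have hcY_cont : Continuous (fun q : Y × Y => h (dY q.1 q.2)) := hh_cont.comp hdY_cont
  have hcY_meas : Measurable (fun q : Y × Y => h (dY q.1 q.2)) := hcY_cont.measurable
  have hk2 : Continuous (fun pq : (X × Y) × (X × Y) => kX pq.1.1 pq.2.1) :=
    hkX_cont.comp ((continuous_fst.comp continuous_fst).prodMk
      (continuous_fst.comp continuous_snd))
  have hd2 : Continuous (fun pq : (X × Y) × (X × Y) => dY pq.1.2 pq.2.2) :=
    hdY_cont.comp ((continuous_snd.comp continuous_fst).prodMk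
      (continuous_snd.comp continuous_snd))
  have hcpair : (fun pq : (X × Y) × (X × Y) => c pq.1 pq.2)
      = fun pq => h (kX pq.1.1 pq.2.1 + dY pq.1.2 pq.2.2) := funext fun pq => hc _ _
  have mc : Measurable (fun pq : (X × Y) × (X × Y) => c pq.1 pq.2) := by
    rw [hcpair]; exact (hh_cont.comp (hk2.add hd2)).measurable
  -- basic identities for D
  have hDν : D = ∫⁻ q, h (dY q.1 q.2) ∂(ν.prod ν) := by
    rw [hDdef]; unfold diamC
    exact (MeasureTheory.lintegral_prod _ hcY_meas.aemeasurable).symm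
  have hνν : (γ.prod γ).map (Prod.map (Prod.snd : X × Y → Y) (Prod.snd : X × Y → Y))
      = ν.prod ν := by
    rw [hνdef]; exact (Measure.map_prod_map _ _ measurable_snd measurable_snd).symm
  have hDγγ : ∫⁻ pq, h (dY pq.1.2 pq.2.2) ∂(γ.prod γ) = D := by
    have := MeasureTheory.lintegral_map hcY_meas
      ((measurable_snd.prodMap measurable_snd) :
        Measurable (Prod.map (Prod.snd : X × Y → Y) (Prod.snd : X × Y → Y)))
      (μ := γ.prod γ)
    rw [hνν] at this
    rw [hDν]; exact this.symm
  -- the infimum characterization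
  have tdep_le : ∀ π : Measure ((X × Y) × (X × Y)),
      (π.map Prod.fst = γ ∧ π.map Prod.snd = μ.prod ν) →
      tdep c γ ≤ ∫⁻ p, c p.1 p.2 ∂π := by
    intro π hπ
    unfold tdep otCost
    rw [← hμdef, ← hνdef]
    exact iInf₂_le π hπ
  constructor
  · -- hard direction
    intro htd
    have hge : ∀ π : Measure ((X × Y) × (X × Y)),
        (π.map Prod.fst = γ ∧ π.map Prod.snd = μ.prod ν) →
        D ≤ ∫⁻ p, c p.1 p.2 ∂π := fun π hπ => htd ▸ tdep_le π hπ
    -- the bad set has measure zero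
    set M : Set ((X × Y) × (X × Y)) := {pq | kX pq.1.1 pq.2.1 < dY pq.1.2 pq.2.2} with hMdef
    have hMopen : IsOpen M := isOpen_lt hk2 hd2
    have hMm : MeasurableSet M := hMopen.measurableSet
    have hM0 : (γ.prod γ) M = 0 := by
      by_contra hM0
      set F : ((X × Y) × (X × Y)) → (X × Y) :=
        fun pq => if pq ∈ M then (pq.2.1, pq.1.2) else (pq.1.1, pq.2.2) with hFdef
      have hFm : Measurable F :=
        Measurable.ite hMm
          ((measurable_fst.comp measurable_snd).prodMk (measurable_snd.comp measurable_fst))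
          ((measurable_fst.comp measurable_fst).prodMk (measurable_snd.comp measurable_snd))
      have hΦm : Measurable (fun pq : (X × Y) × (X × Y) => (pq.1, F pq)) :=
        measurable_fst.prodMk hFm
      set π : Measure ((X × Y) × (X × Y)) :=
        (γ.prod γ).map (fun pq => (pq.1, F pq)) with hπdef
      have hm1 : π.map Prod.fst = γ := by
        rw [hπdef, Measure.map_map measurable_fst hΦm]
        have : (Prod.fst ∘ fun pq : (X × Y) × (X × Y) => (pq.1, F pq))
            = (Prod.fst : (X × Y) × (X × Y) → X × Y) := rfl
        rw [this, Measure.map_fst_prod]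
        simp
      have hm2 : π.map Prod.snd = μ.prod ν := by
        rw [hπdef, Measure.map_map measurable_snd hΦm]
        have hsndΦ : (Prod.snd ∘ fun pq : (X × Y) × (X × Y) => (pq.1, F pq)) = F := rfl
        rw [hsndΦ]
        have hmm : μ.prod ν = (γ.prod γ).map
            (Prod.map (Prod.fst : X × Y → X) (Prod.snd : X × Y → Y)) := by
          rw [hμdef, hνdef]
          exact Measure.map_prod_map _ _ measurable_fst measurable_snd
        rw [hmm]
        refine Measure.ext fun B hB => ?_
        rw [Measure.map_apply hFm hB,
          Measure.map_apply (measurable_fst.prodMap measurable_snd) hB]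
        set m : ((X × Y) × (X × Y)) → X × Y :=
          Prod.map (Prod.fst : X × Y → X) (Prod.snd : X × Y → Y) with hmdef
        have hkey1 : F ⁻¹' B ∩ Mᶜ = m ⁻¹' B ∩ Mᶜ := by
          ext pq
          by_cases hpq : pq ∈ M <;> simp [hFdef, hmdef, hpq, Prod.map]
        have hswapM : Prod.swap ⁻¹' M = M := by
          ext pq
          simp only [hMdef, Set.mem_preimage, Set.mem_setOf_eq, Prod.fst_swap, Prod.snd_swap]
          rw [hkX_symm, hdY_symm]
        have hkey2 : F ⁻¹' B ∩ M = Prod.swap ⁻¹' (m ⁻¹' B ∩ M) := by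
          rw [Set.preimage_inter, hswapM]
          ext pq
          by_cases hpq : pq ∈ M <;> simp [hFdef, hmdef, hpq, Prod.map, Prod.swap]
        have hTm : MeasurableSet (m ⁻¹' B ∩ M) :=
          ((measurable_fst.prodMap measurable_snd) hB).inter hMm
        have hswapγ : (γ.prod γ) (Prod.swap ⁻¹' (m ⁻¹' B ∩ M)) = (γ.prod γ) (m ⁻¹' B ∩ M) := by
          conv_rhs => rw [← Measure.prod_swap (μ := γ) (ν := γ)]
          rw [Measure.map_apply measurable_swap hTm]
        calc (γ.prod γ) (F ⁻¹' B)
            = (γ.prod γ) (F ⁻¹' B ∩ M) + (γ.prod γ) (F ⁻¹' B ∩ Mᶜ) := by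
              rw [← measure_inter_add_diff (F ⁻¹' B) hMm, Set.diff_eq]
          _ = (γ.prod γ) (m ⁻¹' B ∩ M) + (γ.prod γ) (m ⁻¹' B ∩ Mᶜ) := by
              rw [hkey1, hkey2, hswapγ]
          _ = (γ.prod γ) (m ⁻¹' B) := by
              rw [← Set.diff_eq, measure_inter_add_diff (m ⁻¹' B) hMm]
      -- cost of the swap coupling
      have hcostπ : ∫⁻ p, c p.1 p.2 ∂π
          = ∫⁻ pq in M, h (kX pq.1.1 pq.2.1) ∂(γ.prod γ)
            + ∫⁻ pq in Mᶜ, h (dY pq.1.2 pq.2.2) ∂(γ.prod γ) := by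
        rw [hπdef, MeasureTheory.lintegral_map mc hΦm]
        have hptw : ∀ pq : (X × Y) × (X × Y), c (pq.1, F pq).1 (pq.1, F pq).2
            = if pq ∈ M then h (kX pq.1.1 pq.2.1) else h (dY pq.1.2 pq.2.2) := by
          intro pq
          by_cases hpq : pq ∈ M <;>
            simp [hFdef, hpq, hc, hdY_diag, hkX_diag]
        simp_rw [hptw]
        rw [← MeasureTheory.lintegral_add_compl _ hMm]
        congr 1
        · refine MeasureTheory.setLIntegral_congr_fun hMm ?_
          intro pq hpq; exact if_pos hpq
        · refine MeasureTheory.setLIntegral_congr_fun hMm.compl ?_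
          intro pq hpq; exact if_neg hpq
      have hDsplit : ∫⁻ pq in M, h (dY pq.1.2 pq.2.2) ∂(γ.prod γ)
          + ∫⁻ pq in Mᶜ, h (dY pq.1.2 pq.2.2) ∂(γ.prod γ) = D := by
        rw [MeasureTheory.lintegral_add_compl _ hMm, hDγγ]
      have hfinc : ∫⁻ pq in Mᶜ, h (dY pq.1.2 pq.2.2) ∂(γ.prod γ) ≠ ∞ := by
        refine ne_top_of_le_ne_top hdiam ?_
        rw [← hDγγ]
        exact MeasureTheory.setLIntegral_le_lintegral _ _
      have hge' : ∫⁻ pq in M, h (dY pq.1.2 pq.2.2) ∂(γ.prod γ)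
          ≤ ∫⁻ pq in M, h (kX pq.1.1 pq.2.1) ∂(γ.prod γ) := by
        have := hge π ⟨hm1, hm2⟩
        rw [hcostπ, ← hDsplit] at this
        exact (ENNReal.add_le_add_iff_right hfinc).mp this
      have hlt : ∫⁻ pq in M, h (kX pq.1.1 pq.2.1) ∂(γ.prod γ)
          < ∫⁻ pq in M, h (dY pq.1.2 pq.2.2) ∂(γ.prod γ) := by
        have hfk : ∫⁻ pq in M, h (kX pq.1.1 pq.2.1) ∂(γ.prod γ) ≠ ∞ := by
          refine ne_top_of_le_ne_top hdiam ?_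
          refine le_trans (MeasureTheory.setLIntegral_mono (hh_cont.comp hd2).measurable
            fun pq hpq => le_of_lt (hh_mono hpq)) ?_
          rw [← hDγγ]
          exact MeasureTheory.setLIntegral_le_lintegral _ _
        exact MeasureTheory.setLIntegral_strict_mono hMm hM0
          (hh_cont.comp hd2).measurable hfk
          (Filter.Eventually.of_forall fun pq hpq => hh_mono hpq)
      exact absurd hge' (not_le.mpr hlt)
    -- the support-type set S
    set S : Set (X × Y) :=
      (⋃₀ {U : Set (X × Y) | U ∈ TopologicalSpace.countableBasis (X × Y) ∧ γ U = 0})ᶜ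
      with hSdef
    have hSopen : IsOpen Sᶜ := by
      rw [hSdef, compl_compl]
      exact isOpen_sUnion fun U hU => TopologicalSpace.isOpen_of_mem_countableBasis hU.1
    have hSm : MeasurableSet S := by simpa using hSopen.measurableSet.compl
    have hSc0 : γ Sᶜ = 0 := by
      rw [hSdef, compl_compl]
      refine (measure_sUnion_null_iff
        ((TopologicalSpace.countable_countableBasis (X × Y)).mono fun U hU => hU.1)).mpr ?_
      exact fun U hU => hU.2
    have hγS : γ S = 1 := by
      have hle : (1 : ℝ≥0∞) ≤ γ S := by
        calc (1 : ℝ≥0∞) = γ Set.univ := measure_univ.symm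
          _ ≤ γ S + γ Sᶜ := by
              rw [← Set.union_compl_self S]; exact measure_union_le _ _
          _ = γ S := by rw [hSc0, add_zero]
      exact le_antisymm prob_le_one hle
    have hSkey : ∀ p ∈ S, ∀ q ∈ S, dY p.2 q.2 ≤ kX p.1 q.1 := by
      intro p hp q hq
      by_contra hlt
      push_neg at hlt
      have hpq : (p, q) ∈ M := hlt
      obtain ⟨u, v, hu, hv, hpu, hqv, huv⟩ := isOpen_prod_iff.1 hMopen p q hpq
      obtain ⟨U, hUb, hpU, hUu⟩ :=
        (TopologicalSpace.isBasis_countableBasis (X × Y)).exists_subset_of_mem_open hpu hu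
      obtain ⟨V, hVb, hqV, hVv⟩ :=
        (TopologicalSpace.isBasis_countableBasis (X × Y)).exists_subset_of_mem_open hqv hv
      have hUV0 : (γ.prod γ) (U ×ˢ V) = 0 := by
        refine measure_mono_null ?_ hM0
        exact Set.Subset.trans (Set.prod_mono hUu hVv) (Set.prod_subset_iff.mpr fun a ha b hb => huv ⟨ha, hb⟩)
      rw [Measure.prod_prod] at hUV0
      rcases mul_eq_zero.mp hUV0 with h0 | h0
      · exact hp ⟨U, ⟨hUb, h0⟩, hpU⟩
      · exact hq ⟨V, ⟨hVb, h0⟩, hqV⟩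
    have hinj : Set.InjOn Prod.fst S := by
      intro p hp q hq hfst
      have h1 : dY p.2 q.2 ≤ kX p.1 q.1 := hSkey p hp q hq
      rw [hfst, hkX_diag] at h1
      have h2 : p.2 = q.2 := by
        by_contra hne
        exact absurd h1 (not_le.mpr (hdY_pos _ _ hne))
      exact Prod.ext hfst h2
    -- the measurable set A and the map φ
    set A : Set X := Prod.fst '' S with hAdef
    have hAm : MeasurableSet A :=
      hSm.image_of_continuousOn_injOn continuous_fst.continuousOn hinj
    have hYne : Nonempty Y := by
      rcases isEmpty_or_nonempty Y with hne | hne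
      · exfalso
        have h1 : γ Set.univ = 1 := measure_univ
        have h2 : (Set.univ : Set (X × Y)) = ∅ := by
          ext p
          exact iff_of_false (fun _ => hne.false p.2) (fun hp => hp)
        rw [h2, measure_empty] at h1
        exact zero_ne_one h1
      · exact hne
    set φ : X → Y := fun x =>
      if hx : ∃ y, (x, y) ∈ S then hx.choose else Classical.arbitrary Y with hφdef
    have hφgraph : ∀ p ∈ S, φ p.1 = p.2 := by
      intro p hp
      have hex : ∃ y, (p.1, y) ∈ S := ⟨p.2, by rwa [Prod.mk.eta]⟩
      have hmem : (p.1, hex.choose) ∈ S := hex.choose_spec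
      have hval : φ p.1 = hex.choose := by rw [hφdef]; exact dif_pos hex
      rw [hval]
      have := hinj hmem hp (rfl : (p.1, hex.choose).1 = p.1)
      exact congrArg Prod.snd this
    have hAiff : ∀ x : X, x ∈ A ↔ ∃ y, (x, y) ∈ S := by
      intro x
      constructor
      · rintro ⟨p, hp, rfl⟩; exact ⟨p.2, by rwa [Prod.mk.eta]⟩
      · rintro ⟨y, hy⟩; exact ⟨(x, y), hy, rfl⟩
    have hφA : ∀ x ∈ A, (x, φ x) ∈ S := by
      rintro x ⟨p, hp, rfl⟩
      have h1 : (p.1, φ p.1) = p := Prod.ext rfl (hφgraph p hp)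
      rw [h1]; exact hp
    have hφm : Measurable φ := by
      intro B hB
      have himg : MeasurableSet (Prod.fst '' (S ∩ Prod.snd ⁻¹' B)) :=
        (hSm.inter (measurable_snd hB)).image_of_continuousOn_injOn
          continuous_fst.continuousOn (hinj.mono Set.inter_subset_left)
      have hset : φ ⁻¹' B = (Prod.fst '' (S ∩ Prod.snd ⁻¹' B))
          ∪ (Aᶜ ∩ (if Classical.arbitrary Y ∈ B then Set.univ else ∅)) := by
        ext x
        by_cases hxA : x ∈ A
        · simp only [Set.mem_preimage, Set.mem_union, Set.mem_inter_iff, Set.mem_compl_iff,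
            hxA, not_true, false_and, or_false]
          constructor
          · intro hxB
            exact ⟨(x, φ x), ⟨hφA x hxA, hxB⟩, rfl⟩
          · rintro ⟨p, ⟨hpS, hpB⟩, rfl⟩
            rw [hφgraph p hpS]
            exact hpB
        · have hnex : ¬ ∃ y, (x, y) ∈ S := fun hex => hxA ((hAiff x).mpr hex)
          have hval : φ x = Classical.arbitrary Y := by rw [hφdef]; exact dif_neg hnex
          have himgA : x ∉ Prod.fst '' (S ∩ Prod.snd ⁻¹' B) := by
            rintro ⟨p, ⟨hpS, _⟩, rfl⟩
            exact hxA ⟨p, hpS, rfl⟩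
          simp only [Set.mem_preimage, hval, Set.mem_union, himgA, false_or,
            Set.mem_inter_iff, Set.mem_compl_iff, hxA, not_false_iff, true_and]
          split_ifs with hy
          · simp [hy]
          · simp [hy]
      rw [hset]
      refine himg.union (hAm.compl.inter ?_)
      split_ifs
      · exact MeasurableSet.univ
      · exact MeasurableSet.empty
    have hμA : μ A = 1 := by
      rw [hμdef, Measure.map_apply measurable_fst hAm]
      refine le_antisymm prob_le_one ?_
      calc (1 : ℝ≥0∞) = γ S := hγS.symm
        _ ≤ γ (Prod.fst ⁻¹' A) := measure_mono fun p hp => ⟨p, hp, rfl⟩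
    have hgae : ∀ᵐ p ∂γ, (p.1, φ p.1) = p := by
      rw [MeasureTheory.ae_iff]
      refine measure_mono_null ?_ hSc0
      intro p hp hpS
      exact hp (Prod.ext rfl (hφgraph p hpS))
    have hgm2 : Measurable fun x : X => (x, φ x) := measurable_id.prodMk hφm
    have hγmap : γ = μ.map (fun x => (x, φ x)) := by
      rw [hμdef, Measure.map_map hgm2 measurable_fst]
      have hcomp : ((fun x => (x, φ x)) ∘ Prod.fst) = fun p : X × Y => (p.1, φ p.1) := rfl
      rw [hcomp, Measure.map_congr hgae, Measure.map_id']
    exact ⟨φ, hφm, hγmap, A, hAm, hμA,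
      fun x₁ hx₁ x₂ hx₂ => hSkey _ (hφA x₁ hx₁) _ (hφA x₂ hx₂)⟩
  · -- easy
    rintro ⟨φ, hφm, hγφ, A, hAm, hμA, hcon⟩
    have hgm : Measurable (fun x : X => (x, φ x)) := measurable_id.prodMk hφm
    have hνφ : ν = μ.map φ := by
      rw [hνdef]
      conv_lhs => rw [hγφ]
      rw [Measure.map_map measurable_snd hgm]
      rfl
    have hφν : (μ.prod ν).map (Prod.map φ (id : Y → Y)) = ν.prod ν := by
      rw [← Measure.map_prod_map _ _ hφm measurable_id, Measure.map_id, ← hνφ]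
    -- upper bound via the independent-fiber coupling
    have hub : tdep c γ ≤ D := by
      have hΨm : Measurable (fun p : (X × Y) × Y => (p.1, (p.1.1, p.2))) :=
        measurable_fst.prodMk ((measurable_fst.comp measurable_fst).prodMk measurable_snd)
      set π₀ : Measure ((X × Y) × (X × Y)) :=
        (γ.prod ν).map (fun p : (X × Y) × Y => (p.1, (p.1.1, p.2))) with hπ₀def
      have hm1 : π₀.map Prod.fst = γ := by
        rw [hπ₀def, Measure.map_map measurable_fst hΨm]
        have : (Prod.fst ∘ fun p : (X × Y) × Y => (p.1, (p.1.1, p.2)))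
            = (Prod.fst : (X × Y) × Y → X × Y) := rfl
        rw [this, Measure.map_fst_prod]
        simp
      have hm2 : π₀.map Prod.snd = μ.prod ν := by
        rw [hπ₀def, Measure.map_map measurable_snd hΨm]
        have : (Prod.snd ∘ fun p : (X × Y) × Y => (p.1, (p.1.1, p.2)))
            = Prod.map (Prod.fst : X × Y → X) (id : Y → Y) := rfl
        rw [this, ← Measure.map_prod_map _ _ measurable_fst measurable_id,
          Measure.map_id, hμdef]
      have hcost : ∫⁻ p, c p.1 p.2 ∂π₀ = D := by
        rw [hπ₀def, MeasureTheory.lintegral_map mc hΨm]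
        have hptw : ∀ p : (X × Y) × Y,
            c (p.1, (p.1.1, p.2)).1 (p.1, (p.1.1, p.2)).2 = h (dY p.1.2 p.2) := by
          intro p; rw [hc]; simp [hkX_diag]
        simp_rw [hptw]
        have hmm : (γ.prod ν).map (Prod.map (Prod.snd : X × Y → Y) (id : Y → Y))
            = ν.prod ν := by
          rw [← Measure.map_prod_map _ _ measurable_snd measurable_id,
            Measure.map_id, hνdef]
        have := MeasureTheory.lintegral_map hcY_meas
          ((measurable_snd.prodMap measurable_id) :
            Measurable (Prod.map (Prod.snd : X × Y → Y) (id : Y → Y))) (μ := γ.prod ν)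
        rw [hmm] at this
        rw [hDν]
        exact this.symm
      exact hcost ▸ tdep_le π₀ ⟨hm1, hm2⟩
    -- lower bound: every coupling costs at least D
    have hlb : D ≤ tdep c γ := by
      unfold tdep otCost
      rw [← hμdef, ← hνdef]
      refine le_iInf₂ fun π hπ => ?_
      obtain ⟨hπ1, hπ2⟩ := hπ
      haveI : T2Space Y := inferInstance
      have hgraphm : MeasurableSet {p : X × Y | p.1 ∈ A ∧ φ p.1 = p.2} := by
        have h1 : MeasurableSet {p : X × Y | φ p.1 = p.2} := by
          have : {p : X × Y | φ p.1 = p.2}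
              = (fun p : X × Y => (φ p.1, p.2)) ⁻¹' {q : Y × Y | q.1 = q.2} := rfl
          rw [this]
          exact ((hφm.comp measurable_fst).prodMk measurable_snd)
            isClosed_diagonal.measurableSet
        exact (measurable_fst hAm).inter h1
      -- the coupling lives on the good set T
      set T : Set ((X × Y) × (X × Y)) :=
        {pq | (pq.1.1 ∈ A ∧ φ pq.1.1 = pq.1.2) ∧ pq.2.1 ∈ A} with hTdef
      have hT0 : π Tᶜ = 0 := by
        have hsub : Tᶜ ⊆ (Prod.fst ⁻¹' {p : X × Y | p.1 ∈ A ∧ φ p.1 = p.2}ᶜ)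
            ∪ (Prod.snd ⁻¹' (Prod.fst ⁻¹' Aᶜ)) := by
          intro pq hpq
          by_cases h1 : pq.1.1 ∈ A ∧ φ pq.1.1 = pq.1.2
          · right
            exact fun h2 => hpq ⟨h1, h2⟩
          · left; exact h1
        refine measure_mono_null hsub (measure_union_null ?_ ?_)
        · rw [← Measure.map_apply measurable_fst hgraphm.compl, hπ1]
          have : γ {p : X × Y | p.1 ∈ A ∧ φ p.1 = p.2} = 1 := by
            rw [hγφ, Measure.map_apply hgm hgraphm]
            have : (fun x : X => (x, φ x)) ⁻¹' {p : X × Y | p.1 ∈ A ∧ φ p.1 = p.2} = A := by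
              ext x; simp
            rw [this]
            exact hμA
          rw [measure_compl hgraphm (measure_ne_top _ _), measure_univ, this, tsub_self]
        · rw [← Measure.map_apply measurable_snd (measurable_fst hAm.compl), hπ2]
          have : (Prod.fst ⁻¹' Aᶜ : Set (X × Y)) = Aᶜ ×ˢ Set.univ := by
            ext p; simp
          rw [this, Measure.prod_prod]
          have : μ Aᶜ = 0 := by
            rw [measure_compl hAm (measure_ne_top _ _), measure_univ, hμA, tsub_self]
          rw [this, zero_mul]
      have haeT : ∀ᵐ pq ∂π, pq ∈ T := by
        rw [MeasureTheory.ae_iff]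
        exact hT0
      have hbound : ∫⁻ pq, h (dY (φ pq.2.1) pq.2.2) ∂π ≤ ∫⁻ pq, c pq.1 pq.2 ∂π := by
        refine MeasureTheory.lintegral_mono_ae (haeT.mono fun pq hpq => ?_)
        obtain ⟨⟨hx1A, hφ1⟩, hx2A⟩ := hpq
        rw [hc, ← hφ1]
        refine hh_mono.monotone ?_
        calc dY (φ pq.2.1) pq.2.2 ≤ dY (φ pq.2.1) (φ pq.1.1) + dY (φ pq.1.1) pq.2.2 :=
              hdY_triangle _ _ _
          _ ≤ kX pq.1.1 pq.2.1 + dY (φ pq.1.1) pq.2.2 := by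
              refine add_le_add_left ?_ _
              rw [hdY_symm]
              exact hcon _ hx1A _ hx2A
      refine le_trans (le_of_eq ?_) hbound
      have hsm : Measurable (fun q : X × Y => h (dY (φ q.1) q.2)) :=
        hcY_meas.comp ((hφm.comp measurable_fst).prodMk measurable_snd)
      have h1 : ∫⁻ pq, h (dY (φ pq.2.1) pq.2.2) ∂π
          = ∫⁻ q, h (dY (φ q.1) q.2) ∂(μ.prod ν) := by
        rw [← hπ2]
        exact (MeasureTheory.lintegral_map hsm measurable_snd).symm
      rw [h1]
      have h2 := MeasureTheory.lintegral_map hcY_meas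
        ((hφm.prodMap measurable_id) :
          Measurable (Prod.map φ (id : Y → Y))) (μ := μ.prod ν)
      rw [hφν] at h2
      rw [hDν]
      exact h2
    exact le_antisymm hub hlb
end

section
/- Let X be a Polish space and c a positive continuous cost function on X. For probability measures μ, ν on X with supp μ ⊆ supp ν and T_c(μ, ν) < ∞, the equality T_c(μ, ν) = ∫∫ c(x₁,x₂) dμ(x₁) dν(x₂) holds (i.e., the independent coupling μ ⊗ ν is optimal) if and only if μ = δ_x is a Dirac measure at some point x ∈ X. -/
open MeasureTheory ENNReal Filter Topology

lemma msupport_compl_null {X : Type*} [TopologicalSpace X] [MeasurableSpace X]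
    [SecondCountableTopology X] (μ : Measure X) : μ (msupport μ)ᶜ = 0 := by
  have h : (msupport μ)ᶜ = ⋃₀ {U : Set X | IsOpen U ∧ μ U = 0} := by
    ext z
    simp only [Set.mem_compl_iff, msupport, Set.mem_setOf_eq, Set.mem_sUnion]
    constructor
    · intro h
      push_neg at h
      obtain ⟨U, hU, hzU, hμU⟩ := h
      exact ⟨U, ⟨hU, le_antisymm hμU zero_le⟩, hzU⟩
    · rintro ⟨U, ⟨hU, hμU⟩, hz⟩ h'
      exact absurd (h' U hU hz) (by simp [hμU])
  obtain ⟨T, hTc, hTS, hT⟩ :=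
    TopologicalSpace.isOpen_sUnion_countable {U : Set X | IsOpen U ∧ μ U = 0}
      (fun s hs => hs.1)
  rw [h, ← hT, measure_sUnion_null_iff hTc]
  exact fun s hs => (hTS hs).2

lemma eq_dirac_of_singleton {X : Type*} [MeasurableSpace X] [MeasurableSingletonClass X]
    (μ : Measure X) [IsProbabilityMeasure μ] {x : X} (hx : μ {x} = 1) :
    μ = Measure.dirac x := by
  ext s hs
  rw [Measure.dirac_apply' x hs]
  by_cases hxs : x ∈ s
  · have h1 : (1 : ℝ≥0∞) ≤ μ s := hx ▸ measure_mono (Set.singleton_subset_iff.2 hxs)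
    have h2 : μ s ≤ 1 := prob_le_one
    simp [hxs, le_antisymm h2 h1]
  · have h3 : μ s ≤ μ {x}ᶜ := measure_mono (Set.subset_compl_singleton_iff.2 hxs)
    rw [measure_compl (measurableSet_singleton x) (measure_ne_top μ _), hx] at h3
    simp only [measure_univ, tsub_self] at h3
    simp [hxs, le_antisymm h3 zero_le]

lemma otCost_dirac {X : Type*} [TopologicalSpace X] [PolishSpace X] [MeasurableSpace X]
    [BorelSpace X] (c : X → X → ℝ≥0∞) (hcm : Measurable (Function.uncurry c)) (x : X)
    (ν : Measure X) [IsProbabilityMeasure ν] :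
    otCost c (Measure.dirac x) ν = ∫⁻ x₁, ∫⁻ x₂, c x₁ x₂ ∂ν ∂(Measure.dirac x) := by
  have hcx : Measurable fun y => c x y := hcm.comp measurable_prodMk_left
  have hRHS : ∫⁻ x₁, ∫⁻ x₂, c x₁ x₂ ∂ν ∂(Measure.dirac x) = ∫⁻ y, c x y ∂ν :=
    lintegral_dirac _ _
  rw [hRHS]
  apply le_antisymm
  · refine iInf_le_of_le ((Measure.dirac x).prod ν) (iInf_le_of_le ⟨?_, ?_⟩ ?_)
    · simp [Measure.map_fst_prod]
    · simp [Measure.map_snd_prod]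
    · refine le_of_eq ?_
      rw [lintegral_prod (fun p => c p.1 p.2) hcm.aemeasurable]
      exact lintegral_dirac _ _
  · refine le_iInf fun π => le_iInf fun hπ => le_of_eq ?_
    have h0 : π {p : X × X | ¬ p.1 = x} = 0 := by
      have : {p : X × X | ¬ p.1 = x} = Prod.fst ⁻¹' {x}ᶜ := rfl
      rw [this, ← Measure.map_apply measurable_fst (measurableSet_singleton x).compl, hπ.1]
      simp
    have hae : ∀ᵐ p ∂π, p.1 = x := by
      rw [ae_iff]; exact h0
    calc ∫⁻ y, c x y ∂ν = ∫⁻ p, c x p.2 ∂π := by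
          rw [← hπ.2, lintegral_map hcx measurable_snd]
      _ = ∫⁻ p, c p.1 p.2 ∂π := by
          refine lintegral_congr_ae ?_
          filter_upwards [hae] with p hp
          rw [hp]

/-- For a positive continuous cost `c` on a Polish space `X` and
probability measures `μ`, `ν` with `supp μ ⊆ supp ν` and `T_c(μ, ν) < ∞`, the
independent coupling `μ ⊗ ν` is optimal, i.e. `T_c(μ, ν) = ∫∫ c dμ dν`, if and only if
`μ` is a Dirac measure. -/
theorem otCost_eq_prod_integral_iff_dirac
    {X : Type*} [TopologicalSpace X] [PolishSpace X] [MeasurableSpace X] [BorelSpace X]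
    (c : X → X → ℝ≥0∞)
    (hc_cont : Continuous (Function.uncurry c))
    (hc_symm : ∀ x₁ x₂, c x₁ x₂ = c x₂ x₁)
    (hc_diag : ∀ x, c x x = 0)
    (hc_pos : ∀ x₁ x₂, x₁ ≠ x₂ → 0 < c x₁ x₂)
    (μ ν : Measure X) [IsProbabilityMeasure μ] [IsProbabilityMeasure ν]
    (hsupp : msupport μ ⊆ msupport ν)
    (hfin : otCost c μ ν ≠ ∞) :
    otCost c μ ν = ∫⁻ x₁, ∫⁻ x₂, c x₁ x₂ ∂ν ∂μ ↔ ∃ x : X, μ = Measure.dirac x := by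
  have hcm : Measurable (Function.uncurry c) := hc_cont.measurable
  constructor
  · intro heq
    by_contra hnd
    -- μ has two distinct support points
    have hfull : μ (msupport μ) = 1 := by
      have h0 := msupport_compl_null μ
      calc μ (msupport μ) = μ ((msupport μ)ᶜ)ᶜ := by rw [compl_compl]
        _ = μ Set.univ - μ (msupport μ)ᶜ :=
            measure_compl₀ (NullMeasurableSet.of_null h0) (by rw [h0]; exact zero_ne_top)
        _ = 1 := by rw [h0, measure_univ]; simp
    obtain ⟨x₁, hx₁⟩ : (msupport μ).Nonempty := by
      rw [Set.nonempty_iff_ne_empty]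
      intro h
      rw [h] at hfull
      simp at hfull
    obtain ⟨x₂, hx₂, hne⟩ : ∃ x₂ ∈ msupport μ, x₂ ≠ x₁ := by
      by_contra h
      push_neg at h
      refine hnd ⟨x₁, eq_dirac_of_singleton μ ?_⟩
      have hsub : msupport μ ⊆ {x₁} := fun z hz => h z hz
      exact le_antisymm prob_le_one (hfull ▸ measure_mono hsub)
    have hne' : x₁ ≠ x₂ := hne.symm
    -- choose ε
    obtain ⟨ε, hε0, hεT, hε3⟩ : ∃ ε : ℝ≥0∞, ε ≠ 0 ∧ ε ≠ ∞ ∧ 3 * ε < c x₁ x₂ := by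
      rcases eq_or_ne (c x₁ x₂) ∞ with h | h
      · refine ⟨1, one_ne_zero, one_ne_top, ?_⟩
        rw [h, mul_one]
        exact lt_top_iff_ne_top.2 (by norm_num)
      · have hd0 : c x₁ x₂ ≠ 0 := (hc_pos _ _ hne').ne'
        have hq0 : c x₁ x₂ / 4 ≠ 0 := by
          simp [ENNReal.div_eq_zero_iff, hd0]
        have hqT : c x₁ x₂ / 4 ≠ ∞ := (ENNReal.div_lt_top h (by norm_num)).ne
        refine ⟨c x₁ x₂ / 4, hq0, hqT, ?_⟩
        calc 3 * (c x₁ x₂ / 4) < 4 * (c x₁ x₂ / 4) := by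
              rw [ENNReal.mul_lt_mul_iff_left hq0 hqT]; norm_num
          _ = c x₁ x₂ := ENNReal.mul_div_cancel' (by norm_num) (by norm_num)
    -- rectangles
    have hV1 : IsOpen {p : X × X | Function.uncurry c p < ε} :=
      isOpen_lt hc_cont continuous_const
    have hV3 : IsOpen {p : X × X | 3 * ε < Function.uncurry c p} :=
      isOpen_lt continuous_const hc_cont
    obtain ⟨u₁, v₁, hu₁, hv₁, hx₁u, hx₁v, hsub₁⟩ :=
      isOpen_prod_iff.1 hV1 x₁ x₁
        (by simp [Function.uncurry, hc_diag, pos_iff_ne_zero, hε0])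
    obtain ⟨u₂, v₂, hu₂, hv₂, hx₂u, hx₂v, hsub₂⟩ :=
      isOpen_prod_iff.1 hV1 x₂ x₂
        (by simp [Function.uncurry, hc_diag, pos_iff_ne_zero, hε0])
    obtain ⟨u₃, v₃, hu₃, hv₃, hx₃u, hx₃v, hsub₃⟩ :=
      isOpen_prod_iff.1 hV3 x₁ x₂ hε3
    set U₁ := u₁ ∩ v₁ ∩ u₃ with hU₁def
    set U₂ := u₂ ∩ v₂ ∩ v₃ with hU₂def
    have hU₁o : IsOpen U₁ := (hu₁.inter hv₁).inter hu₃
    have hU₂o : IsOpen U₂ := (hu₂.inter hv₂).inter hv₃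
    have hx₁U : x₁ ∈ U₁ := ⟨⟨hx₁u, hx₁v⟩, hx₃u⟩
    have hx₂U : x₂ ∈ U₂ := ⟨⟨hx₂u, hx₂v⟩, hx₃v⟩
    have hsmall₁ : ∀ p ∈ U₁ ×ˢ U₁, c p.1 p.2 ≤ ε := fun p hp =>
      le_of_lt (hsub₁ ⟨hp.1.1.1, hp.2.1.2⟩)
    have hsmall₂ : ∀ p ∈ U₂ ×ˢ U₂, c p.1 p.2 ≤ ε := fun p hp =>
      le_of_lt (hsub₂ ⟨hp.1.1.1, hp.2.1.2⟩)
    have hbig : ∀ p ∈ U₁ ×ˢ U₂, 3 * ε ≤ c p.1 p.2 := fun p hp =>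
      le_of_lt (hsub₃ ⟨hp.1.2, hp.2.2⟩)
    -- masses
    set a := μ U₁ with hadef
    set b := μ U₂ with hbdef
    set a' := ν U₁ with ha'def
    set b' := ν U₂ with hb'def
    have ha0 : a ≠ 0 := (hx₁ U₁ hU₁o hx₁U).ne'
    have hb0 : b ≠ 0 := (hx₂ U₂ hU₂o hx₂U).ne'
    have ha'0 : a' ≠ 0 := (hsupp hx₁ U₁ hU₁o hx₁U).ne'
    have hb'0 : b' ≠ 0 := (hsupp hx₂ U₂ hU₂o hx₂U).ne'
    have haT : a ≠ ∞ := measure_ne_top μ _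
    have hbT : b ≠ ∞ := measure_ne_top μ _
    have ha'T : a' ≠ ∞ := measure_ne_top ν _
    have hb'T : b' ≠ ∞ := measure_ne_top ν _
    -- measures
    set P := μ.prod ν with hPdef
    set A₁ := μ.restrict U₁ with hA₁def
    set A₂ := μ.restrict U₂ with hA₂def
    set B₁ := ν.restrict U₁ with hB₁def
    set B₂ := ν.restrict U₂ with hB₂def
    set bad : Measure (X × X) :=
      (a⁻¹ * b'⁻¹) • A₁.prod B₂ + (b⁻¹ * a'⁻¹) • A₂.prod B₁ with hbaddef
    set good : Measure (X × X) :=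
      (a⁻¹ * a'⁻¹) • A₁.prod B₁ + (b⁻¹ * b'⁻¹) • A₂.prod B₂ with hgooddef
    set s := min (a * b') (a' * b) / 2 with hsdef
    have hmin0 : min (a * b') (a' * b) ≠ 0 :=
      (lt_min (pos_iff_ne_zero.2 (mul_ne_zero ha0 hb'0))
        (pos_iff_ne_zero.2 (mul_ne_zero ha'0 hb0))).ne'
    have hminT : min (a * b') (a' * b) ≠ ∞ :=
      ((min_le_left _ _).trans_lt (ENNReal.mul_lt_top haT.lt_top hb'T.lt_top)).ne
    have hs0 : s ≠ 0 := by
      rw [hsdef]; simp [ENNReal.div_eq_zero_iff, hmin0]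
    have hsT : s ≠ ∞ := (ENNReal.div_lt_top hminT (by norm_num)).ne
    -- s • bad ≤ P
    have hkey1 : s * (a⁻¹ * b'⁻¹) ≤ 2⁻¹ := by
      have hs_le : s ≤ a * b' * 2⁻¹ := by
        rw [hsdef, ENNReal.div_eq_inv_mul, mul_comm]
        exact mul_le_mul_left (min_le_left _ _) _
      calc s * (a⁻¹ * b'⁻¹) ≤ a * b' * 2⁻¹ * (a⁻¹ * b'⁻¹) := mul_le_mul_left hs_le _
        _ = a * a⁻¹ * (b' * b'⁻¹) * 2⁻¹ := by ring
        _ = 2⁻¹ := by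
            rw [ENNReal.mul_inv_cancel ha0 haT, ENNReal.mul_inv_cancel hb'0 hb'T,
              one_mul, one_mul]
    have hkey2 : s * (b⁻¹ * a'⁻¹) ≤ 2⁻¹ := by
      have hs_le : s ≤ a' * b * 2⁻¹ := by
        rw [hsdef, ENNReal.div_eq_inv_mul, mul_comm]
        exact mul_le_mul_left (min_le_right _ _) _
      calc s * (b⁻¹ * a'⁻¹) ≤ a' * b * 2⁻¹ * (b⁻¹ * a'⁻¹) := mul_le_mul_left hs_le _
        _ = b * b⁻¹ * (a' * a'⁻¹) * 2⁻¹ := by ring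
        _ = 2⁻¹ := by
            rw [ENNReal.mul_inv_cancel hb0 hbT, ENNReal.mul_inv_cancel ha'0 ha'T,
              one_mul, one_mul]
    have hres1 : ∀ t : Set (X × X), (A₁.prod B₂) t ≤ P t := by
      intro t
      rw [hA₁def, hB₂def, Measure.prod_restrict]
      exact Measure.le_iff'.1 Measure.restrict_le_self t
    have hres2 : ∀ t : Set (X × X), (A₂.prod B₁) t ≤ P t := by
      intro t
      rw [hA₂def, hB₁def, Measure.prod_restrict]
      exact Measure.le_iff'.1 Measure.restrict_le_self t
    have hle : s • bad ≤ P := by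
      rw [Measure.le_iff']
      intro t
      calc (s • bad) t
          = s * (a⁻¹ * b'⁻¹) * (A₁.prod B₂) t + s * (b⁻¹ * a'⁻¹) * (A₂.prod B₁) t := by
            simp [hbaddef, Measure.add_apply, Measure.smul_apply, smul_eq_mul, mul_add, mul_assoc]
        _ ≤ 2⁻¹ * P t + 2⁻¹ * P t := by
            gcongr
            · exact Measure.le_iff'.2 hres1
            · exact Measure.le_iff'.2 hres2
        _ = P t := by rw [← add_mul, ENNReal.inv_two_add_inv_two, one_mul]
    haveI hsbadfin : IsFiniteMeasure (s • bad) :=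
      ⟨lt_of_le_of_lt (Measure.le_iff'.1 hle Set.univ) (measure_lt_top P _)⟩
    set ρ := P - s • bad with hρdef
    have hρ : ρ + s • bad = P := Measure.sub_add_cancel_of_le hle
    set π := ρ + s • good with hπdef
    -- marginals
    have hmA₁ : (A₁.prod B₂).map Prod.fst = b' • A₁ := by
      rw [Measure.map_fst_prod, hB₂def, Measure.restrict_apply_univ]
    have hmA₂ : (A₂.prod B₁).map Prod.fst = a' • A₂ := by
      rw [Measure.map_fst_prod, hB₁def, Measure.restrict_apply_univ]
    have hmA₁' : (A₁.prod B₁).map Prod.fst = a' • A₁ := by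
      rw [Measure.map_fst_prod, hB₁def, Measure.restrict_apply_univ]
    have hmA₂' : (A₂.prod B₂).map Prod.fst = b' • A₂ := by
      rw [Measure.map_fst_prod, hB₂def, Measure.restrict_apply_univ]
    have hmB₂ : (A₁.prod B₂).map Prod.snd = a • B₂ := by
      rw [Measure.map_snd_prod, hA₁def, Measure.restrict_apply_univ]
    have hmB₁ : (A₂.prod B₁).map Prod.snd = b • B₁ := by
      rw [Measure.map_snd_prod, hA₂def, Measure.restrict_apply_univ]
    have hmB₁' : (A₁.prod B₁).map Prod.snd = a • B₁ := by
      rw [Measure.map_snd_prod, hA₁def, Measure.restrict_apply_univ]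
    have hmB₂' : (A₂.prod B₂).map Prod.snd = b • B₂ := by
      rw [Measure.map_snd_prod, hA₂def, Measure.restrict_apply_univ]
    have hmapf : bad.map Prod.fst = good.map Prod.fst := by
      rw [hbaddef, hgooddef, Measure.map_add _ _ measurable_fst,
        Measure.map_add _ _ measurable_fst, Measure.map_smul, Measure.map_smul,
        Measure.map_smul, Measure.map_smul, hmA₁, hmA₂, hmA₁', hmA₂',
        smul_smul, smul_smul, smul_smul, smul_smul]
      congr 2
      · rw [mul_assoc, ENNReal.inv_mul_cancel hb'0 hb'T, mul_one,
          mul_assoc, ENNReal.inv_mul_cancel ha'0 ha'T, mul_one]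
      · rw [mul_assoc, ENNReal.inv_mul_cancel ha'0 ha'T, mul_one,
          mul_assoc, ENNReal.inv_mul_cancel hb'0 hb'T, mul_one]
    have hmaps : bad.map Prod.snd = good.map Prod.snd := by
      rw [hbaddef, hgooddef, Measure.map_add _ _ measurable_snd,
        Measure.map_add _ _ measurable_snd, Measure.map_smul, Measure.map_smul,
        Measure.map_smul, Measure.map_smul, hmB₂, hmB₁, hmB₁', hmB₂',
        smul_smul, smul_smul, smul_smul, smul_smul]
      rw [add_comm]
      congr 2
      · rw [show b⁻¹ * a'⁻¹ * b = a'⁻¹ * (b * b⁻¹) by ring,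
          show a⁻¹ * a'⁻¹ * a = a'⁻¹ * (a * a⁻¹) by ring,
          ENNReal.mul_inv_cancel hb0 hbT, ENNReal.mul_inv_cancel ha0 haT]
      · rw [show a⁻¹ * b'⁻¹ * a = b'⁻¹ * (a * a⁻¹) by ring,
          show b⁻¹ * b'⁻¹ * b = b'⁻¹ * (b * b⁻¹) by ring,
          ENNReal.mul_inv_cancel ha0 haT, ENNReal.mul_inv_cancel hb0 hbT]
    have hπf : π.map Prod.fst = μ := by
      have h1 : π.map Prod.fst = (ρ + s • bad).map Prod.fst := by
        rw [hπdef, Measure.map_add _ _ measurable_fst, Measure.map_add _ _ measurable_fst,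
          Measure.map_smul, Measure.map_smul, hmapf]
      rw [h1, hρ, hPdef, Measure.map_fst_prod, measure_univ, one_smul]
    have hπs : π.map Prod.snd = ν := by
      have h1 : π.map Prod.snd = (ρ + s • bad).map Prod.snd := by
        rw [hπdef, Measure.map_add _ _ measurable_snd, Measure.map_add _ _ measurable_snd,
          Measure.map_smul, Measure.map_smul, hmaps]
      rw [h1, hρ, hPdef, Measure.map_snd_prod, measure_univ, one_smul]
    -- integral bounds
    have hIg1 : ∫⁻ p, c p.1 p.2 ∂(A₁.prod B₁) ≤ ε * (a * a') := by
      rw [hA₁def, hB₁def, Measure.prod_restrict]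
      have hS : MeasurableSet (U₁ ×ˢ U₁) := (hU₁o.prod hU₁o).measurableSet
      calc ∫⁻ p, c p.1 p.2 ∂(μ.prod ν).restrict (U₁ ×ˢ U₁)
          ≤ ∫⁻ _, ε ∂(μ.prod ν).restrict (U₁ ×ˢ U₁) := by
            refine lintegral_mono_ae ?_
            filter_upwards [ae_restrict_mem hS] with p hp
            exact hsmall₁ p hp
        _ = ε * (a * a') := by
            rw [lintegral_const, Measure.restrict_apply_univ, Measure.prod_prod]
    have hIg2 : ∫⁻ p, c p.1 p.2 ∂(A₂.prod B₂) ≤ ε * (b * b') := by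
      rw [hA₂def, hB₂def, Measure.prod_restrict]
      have hS : MeasurableSet (U₂ ×ˢ U₂) := (hU₂o.prod hU₂o).measurableSet
      calc ∫⁻ p, c p.1 p.2 ∂(μ.prod ν).restrict (U₂ ×ˢ U₂)
          ≤ ∫⁻ _, ε ∂(μ.prod ν).restrict (U₂ ×ˢ U₂) := by
            refine lintegral_mono_ae ?_
            filter_upwards [ae_restrict_mem hS] with p hp
            exact hsmall₂ p hp
        _ = ε * (b * b') := by
            rw [lintegral_const, Measure.restrict_apply_univ, Measure.prod_prod]
    have hIb1 : 3 * ε * (a * b') ≤ ∫⁻ p, c p.1 p.2 ∂(A₁.prod B₂) := by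
      rw [hA₁def, hB₂def, Measure.prod_restrict]
      have hS : MeasurableSet (U₁ ×ˢ U₂) := (hU₁o.prod hU₂o).measurableSet
      calc 3 * ε * (a * b')
          = ∫⁻ _, 3 * ε ∂(μ.prod ν).restrict (U₁ ×ˢ U₂) := by
            rw [lintegral_const, Measure.restrict_apply_univ, Measure.prod_prod]
        _ ≤ ∫⁻ p, c p.1 p.2 ∂(μ.prod ν).restrict (U₁ ×ˢ U₂) := by
            refine lintegral_mono_ae ?_
            filter_upwards [ae_restrict_mem hS] with p hp
            exact hbig p hp
    have hIb2 : 3 * ε * (b * a') ≤ ∫⁻ p, c p.1 p.2 ∂(A₂.prod B₁) := by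
      rw [hA₂def, hB₁def, Measure.prod_restrict]
      have hS : MeasurableSet (U₂ ×ˢ U₁) := (hU₂o.prod hU₁o).measurableSet
      calc 3 * ε * (b * a')
          = ∫⁻ _, 3 * ε ∂(μ.prod ν).restrict (U₂ ×ˢ U₁) := by
            rw [lintegral_const, Measure.restrict_apply_univ, Measure.prod_prod]
        _ ≤ ∫⁻ p, c p.1 p.2 ∂(μ.prod ν).restrict (U₂ ×ˢ U₁) := by
            refine lintegral_mono_ae ?_
            filter_upwards [ae_restrict_mem hS] with p hp
            have hp' : (p.2, p.1) ∈ U₁ ×ˢ U₂ := ⟨hp.2, hp.1⟩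
            rw [hc_symm]
            exact hbig (p.2, p.1) hp'
    have hLgood : ∫⁻ p, c p.1 p.2 ∂good ≤ 2 * ε := by
      rw [hgooddef, lintegral_add_measure, lintegral_smul_measure, lintegral_smul_measure]
      calc (a⁻¹ * a'⁻¹) * ∫⁻ p, c p.1 p.2 ∂(A₁.prod B₁)
            + (b⁻¹ * b'⁻¹) * ∫⁻ p, c p.1 p.2 ∂(A₂.prod B₂)
          ≤ (a⁻¹ * a'⁻¹) * (ε * (a * a')) + (b⁻¹ * b'⁻¹) * (ε * (b * b')) := by
            gcongr
        _ = ε * (a * a⁻¹ * (a' * a'⁻¹)) + ε * (b * b⁻¹ * (b' * b'⁻¹)) := by ring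
        _ = 2 * ε := by
            rw [ENNReal.mul_inv_cancel ha0 haT, ENNReal.mul_inv_cancel ha'0 ha'T,
              ENNReal.mul_inv_cancel hb0 hbT, ENNReal.mul_inv_cancel hb'0 hb'T]
            ring
    have hLbad : 6 * ε ≤ ∫⁻ p, c p.1 p.2 ∂bad := by
      rw [hbaddef, lintegral_add_measure, lintegral_smul_measure, lintegral_smul_measure]
      calc (6 : ℝ≥0∞) * ε
          = (a⁻¹ * b'⁻¹) * (3 * ε * (a * b')) + (b⁻¹ * a'⁻¹) * (3 * ε * (b * a')) := by
            rw [show (a⁻¹ * b'⁻¹) * (3 * ε * (a * b')) = 3 * ε * (a * a⁻¹ * (b' * b'⁻¹)) by ring,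
              show (b⁻¹ * a'⁻¹) * (3 * ε * (b * a')) = 3 * ε * (b * b⁻¹ * (a' * a'⁻¹)) by ring,
              ENNReal.mul_inv_cancel ha0 haT, ENNReal.mul_inv_cancel hb'0 hb'T,
              ENNReal.mul_inv_cancel hb0 hbT, ENNReal.mul_inv_cancel ha'0 ha'T]
            ring
        _ ≤ (a⁻¹ * b'⁻¹) * ∫⁻ p, c p.1 p.2 ∂(A₁.prod B₂)
            + (b⁻¹ * a'⁻¹) * ∫⁻ p, c p.1 p.2 ∂(A₂.prod B₁) := by
            gcongr
    -- final contradiction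
    have hLP : ∫⁻ p, c p.1 p.2 ∂P = ∫⁻ x₁, ∫⁻ x₂, c x₁ x₂ ∂ν ∂μ := by
      rw [hPdef]; exact lintegral_prod (fun p => c p.1 p.2) hcm.aemeasurable
    have hPfin : ∫⁻ p, c p.1 p.2 ∂P ≠ ∞ := by rw [hLP, ← heq]; exact hfin
    have hsplitP : ∫⁻ p, c p.1 p.2 ∂P
        = ∫⁻ p, c p.1 p.2 ∂ρ + s * ∫⁻ p, c p.1 p.2 ∂bad := by
      conv_lhs => rw [← hρ]
      rw [lintegral_add_measure, lintegral_smul_measure, smul_eq_mul]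
    have hsplitπ : ∫⁻ p, c p.1 p.2 ∂π
        = ∫⁻ p, c p.1 p.2 ∂ρ + s * ∫⁻ p, c p.1 p.2 ∂good := by
      rw [hπdef, lintegral_add_measure, lintegral_smul_measure, smul_eq_mul]
    have hρfin : ∫⁻ p, c p.1 p.2 ∂ρ ≠ ∞ := by
      intro h
      exact hPfin (by rw [hsplitP, h, top_add])
    have hstrict : s * (2 * ε) < s * (6 * ε) := by
      rw [ENNReal.mul_lt_mul_iff_right hs0 hsT]
      rw [show (2 : ℝ≥0∞) * ε = ε * 2 by ring, show (6 : ℝ≥0∞) * ε = ε * 6 by ring,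
        ENNReal.mul_lt_mul_iff_right hε0 hεT]
      norm_num
    have hπlt : ∫⁻ p, c p.1 p.2 ∂π < ∫⁻ p, c p.1 p.2 ∂P := by
      rw [hsplitπ, hsplitP]
      calc ∫⁻ p, c p.1 p.2 ∂ρ + s * ∫⁻ p, c p.1 p.2 ∂good
          ≤ ∫⁻ p, c p.1 p.2 ∂ρ + s * (2 * ε) :=
            add_le_add_right (mul_le_mul_right hLgood s) _
        _ < ∫⁻ p, c p.1 p.2 ∂ρ + s * (6 * ε) := ENNReal.add_lt_add_left hρfin hstrict
        _ ≤ ∫⁻ p, c p.1 p.2 ∂ρ + s * ∫⁻ p, c p.1 p.2 ∂bad :=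
            add_le_add_right (mul_le_mul_right hLbad s) _
    have hot : otCost c μ ν ≤ ∫⁻ p, c p.1 p.2 ∂π :=
      iInf_le_of_le π (iInf_le_of_le ⟨hπf, hπs⟩ le_rfl)
    have : otCost c μ ν < otCost c μ ν :=
      lt_of_le_of_lt hot (hπlt.trans_le (le_of_eq (hLP.trans heq.symm)))
    exact lt_irrefl _ this
  · rintro ⟨x, rfl⟩
    exact otCost_dirac c hcm x ν
end
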